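/- Let ĝ_U, ĝ_C be ℝ^n-valued random vectors with E[⟨ĝ_U, ĝ_C⟩] = 0, and let f ∈ [0,1]^n be a (possibly random, measurable w.r.t. (ĝ_U, ĝ_C)) vector satisfying: fᵢ > 1/2 iff ĝ_{U,i}ĝ_{C,i} > 0, fᵢ < 1/2 if ĝ_{U,i}ĝ_{C,i} < 0, fᵢ = 1/2 if ĝ_{U,i}ĝ_{C,i} = 0. Then for any α, β > 0, the update Δ = -f ⊙ (αĝ_U + βĝ_C) satisfies E[⟨Δ, ĝ_C⟩] ≤ 0 and E[⟨Δ, ĝ_U⟩] ≤ 0. -/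
import Mathlib


open MeasureTheory

/-- Focus update's theoretical guarantee: feasibility in expectation. -/
theorem stmt_12 {n : ℕ} {Ω : Type*} [MeasurableSpace Ω]
    (P : Measure Ω) [IsProbabilityMeasure P]
    (ghatU ghatC f : Ω → Fin n → ℝ)
    (hf01 : ∀ ω i, f ω i ∈ Set.Icc (0:ℝ) 1)
    (h1 : ∀ ω i, f ω i > 1 / 2 ↔ 0 < ghatU ω i * ghatC ω i)
    (h2 : ∀ ω i, ghatU ω i * ghatC ω i < 0 → f ω i < 1 / 2)
    (h3 : ∀ ω i, ghatU ω i * ghatC ω i = 0 → f ω i = 1 / 2)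
    (horth : ∫ ω, (∑ i, ghatU ω i * ghatC ω i) ∂P = 0)
    (α β : ℝ) (hα : 0 < α) (hβ : 0 < β)
    (hint0 : Integrable (fun ω => ∑ i, ghatU ω i * ghatC ω i) P)
    (hint1 : Integrable (fun ω => ∑ i, f ω i * (ghatU ω i * ghatC ω i)) P)
    (hint2 : Integrable (fun ω => ∑ i, f ω i * ghatU ω i ^ 2) P)
    (hint3 : Integrable (fun ω => ∑ i, f ω i * ghatC ω i ^ 2) P) :
    (∫ ω, ∑ i, (-(f ω i * (α * ghatU ω i + β * ghatC ω i))) * ghatC ω i ∂P ≤ 0) ∧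
    (∫ ω, ∑ i, (-(f ω i * (α * ghatU ω i + β * ghatC ω i))) * ghatU ω i ∂P ≤ 0) := by
  -- pointwise key: (1/2) * (UC) ≤ f * UC
  have key : ∀ ω i, (1/2 : ℝ) * (ghatU ω i * ghatC ω i) ≤ f ω i * (ghatU ω i * ghatC ω i) := by
    intro ω i
    rcases lt_trichotomy (ghatU ω i * ghatC ω i) 0 with hlt | heq | hgt
    · nlinarith [h2 ω i hlt]
    · rw [heq]; ring_nf; rfl
    · nlinarith [(h1 ω i).mpr hgt]
  -- E[∑ f UC] ≥ 0
  have hUC : 0 ≤ ∫ ω, ∑ i, f ω i * (ghatU ω i * ghatC ω i) ∂P := by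
    have hmono : ∫ ω, (1/2 : ℝ) * ∑ i, ghatU ω i * ghatC ω i ∂P
        ≤ ∫ ω, ∑ i, f ω i * (ghatU ω i * ghatC ω i) ∂P :=
      integral_mono (hint0.const_mul (1/2 : ℝ)) hint1
        (fun ω => by rw [Finset.mul_sum]; exact Finset.sum_le_sum (fun i _ => key ω i))
    calc (0:ℝ) = ∫ ω, (1/2 : ℝ) * ∑ i, ghatU ω i * ghatC ω i ∂P := by
            rw [integral_const_mul, horth]; ring
      _ ≤ ∫ ω, ∑ i, f ω i * (ghatU ω i * ghatC ω i) ∂P := hmono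
  have hC2 : 0 ≤ ∫ ω, ∑ i, f ω i * ghatC ω i ^ 2 ∂P :=
    integral_nonneg fun ω => Finset.sum_nonneg fun i _ =>
      mul_nonneg (hf01 ω i).1 (sq_nonneg _)
  have hU2 : 0 ≤ ∫ ω, ∑ i, f ω i * ghatU ω i ^ 2 ∂P :=
    integral_nonneg fun ω => Finset.sum_nonneg fun i _ =>
      mul_nonneg (hf01 ω i).1 (sq_nonneg _)
  constructor
  · have heq : (fun ω => ∑ i, (-(f ω i * (α * ghatU ω i + β * ghatC ω i))) * ghatC ω i)
        = fun ω => -(α * ∑ i, f ω i * (ghatU ω i * ghatC ω i)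
            + β * ∑ i, f ω i * ghatC ω i ^ 2) := by
      funext ω
      rw [Finset.mul_sum, Finset.mul_sum, ← Finset.sum_add_distrib, ← Finset.sum_neg_distrib]
      exact Finset.sum_congr rfl fun i _ => by ring
    rw [heq, integral_neg, integral_add (hint1.const_mul α) (hint3.const_mul β),
      integral_const_mul, integral_const_mul]
    nlinarith
  · have heq : (fun ω => ∑ i, (-(f ω i * (α * ghatU ω i + β * ghatC ω i))) * ghatU ω i)
        = fun ω => -(β * ∑ i, f ω i * (ghatU ω i * ghatC ω i)
            + α * ∑ i, f ω i * ghatU ω i ^ 2) := by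
      funext ω
      rw [Finset.mul_sum, Finset.mul_sum, ← Finset.sum_add_distrib, ← Finset.sum_neg_distrib]
      exact Finset.sum_congr rfl fun i _ => by ring
    rw [heq, integral_neg, integral_add (hint1.const_mul β) (hint2.const_mul α),
      integral_const_mul, integral_const_mul]
    nlinarith
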